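/- Let P : [0,T] → S^n be continuous, and suppose that at every t₀ ∈ [0,T] the limit P'(t₀) := lim_{t→t₀} (P(t) − P(t₀))/(t − t₀) exists and satisfies −P'(t₀) ≤ P(t₀)A(t₀) + A(t₀)ᵀP(t₀) + C(t₀)ᵀP(t₀)C(t₀) + Q̂ in the Loewner order, where A, C : [0,T] → ℝ^{n×n} are continuous and Q̂ ∈ S^n is positive definite. If 0 ≤ P(t) for all t and P(T) = G with 0 ≤ G ≤ Ĝ for a positive definite Ĝ, then sup_{t∈[0,T]} |P(t)| ≤ (|Ĝ| + T|Q̂|) · exp(∫₀^T (2|A(s)| + |C(s)|²) ds). -/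

import Mathlib

open Matrix
open scoped Matrix.Norms.L2Operator
open scoped RealInnerProductSpace

open Matrix
open scoped Matrix.Norms.L2Operator RealInnerProductSpace

section Helpers

variable {n : ℕ}

lemma psd_quad_nonneg' {M : Matrix (Fin n) (Fin n) ℝ} (hM : M.PosSemidef) (x : Fin n → ℝ) :
    0 ≤ x ⬝ᵥ M *ᵥ x := by simpa using hM.dotProduct_mulVec_nonneg x

lemma psd_symm_dot' {M : Matrix (Fin n) (Fin n) ℝ} (hM : M.IsHermitian) (x y : Fin n → ℝ) :
    x ⬝ᵥ M *ᵥ y = y ⬝ᵥ M *ᵥ x := by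
  have : M.IsSymm := by rwa [Matrix.IsHermitian, conjTranspose_eq_transpose_of_trivial] at hM
  calc x ⬝ᵥ M *ᵥ y = (Mᵀ *ᵥ x) ⬝ᵥ y := by rw [Matrix.dotProduct_mulVec, ← Matrix.mulVec_transpose]
    _ = y ⬝ᵥ M *ᵥ x := by rw [this.eq, dotProduct_comm]

lemma psd_cs' {M : Matrix (Fin n) (Fin n) ℝ} (hM : M.PosSemidef) (x y : Fin n → ℝ) :
    (x ⬝ᵥ M *ᵥ y) ^ 2 ≤ (x ⬝ᵥ M *ᵥ x) * (y ⬝ᵥ M *ᵥ y) := by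
  have key : ∀ t : ℝ, 0 ≤ (y ⬝ᵥ M *ᵥ y) * (t * t) + (2 * (x ⬝ᵥ M *ᵥ y)) * t + x ⬝ᵥ M *ᵥ x := by
    intro t
    have h := psd_quad_nonneg' hM (x + t • y)
    have e : (x + t • y) ⬝ᵥ M *ᵥ (x + t • y)
        = (y ⬝ᵥ M *ᵥ y) * (t * t) + (2 * (x ⬝ᵥ M *ᵥ y)) * t + x ⬝ᵥ M *ᵥ x := by
      rw [add_dotProduct, Matrix.mulVec_add, dotProduct_add, dotProduct_add,
        smul_dotProduct, Matrix.mulVec_smul, dotProduct_smul]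
      rw [psd_symm_dot' hM.1 y x]
      ring_nf
      simp [smul_eq_mul]
      ring
    linarith [e ▸ h]
  have hd := discrim_le_zero key
  rw [discrim] at hd
  nlinarith [hd]

lemma norm_sq_eq_dot' (x : EuclideanSpace ℝ (Fin n)) :
    ‖x‖ ^ 2 = (WithLp.equiv 2 _ x) ⬝ᵥ (WithLp.equiv 2 _ x) := by
  rw [← real_inner_self_eq_norm_sq, EuclideanSpace.inner_eq_star_dotProduct]
  simp

lemma quad_le_norm' (M : Matrix (Fin n) (Fin n) ℝ) (x : EuclideanSpace ℝ (Fin n)) :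
    (WithLp.equiv 2 _ x) ⬝ᵥ M *ᵥ (WithLp.equiv 2 _ x) ≤ ‖M‖ * ‖x‖ ^ 2 := by
  have h1 : (WithLp.equiv 2 _ x) ⬝ᵥ M *ᵥ (WithLp.equiv 2 _ x)
      = ⟪x, toEuclideanCLM (𝕜 := ℝ) M x⟫ := by
    rw [EuclideanSpace.inner_eq_star_dotProduct]
    simp [Matrix.toLin'_apply]
    exact dotProduct_comm _ _
  rw [h1]
  calc ⟪x, toEuclideanCLM (𝕜 := ℝ) M x⟫ ≤ ‖x‖ * ‖toEuclideanCLM (𝕜 := ℝ) M x‖ :=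
        real_inner_le_norm _ _
    _ ≤ ‖x‖ * (‖M‖ * ‖x‖) := by
        gcongr
        exact (toEuclideanCLM (𝕜 := ℝ) M).le_opNorm x
    _ = ‖M‖ * ‖x‖ ^ 2 := by ring

lemma norm_le_of_quad' {M : Matrix (Fin n) (Fin n) ℝ} (hM : M.PosSemidef) {c : ℝ} (hc : 0 ≤ c)
    (h : ∀ x : EuclideanSpace ℝ (Fin n),
      (WithLp.equiv 2 _ x) ⬝ᵥ M *ᵥ (WithLp.equiv 2 _ x) ≤ c * ‖x‖ ^ 2) :
    ‖M‖ ≤ c := by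
  rw [Matrix.cstar_norm_def]
  refine ContinuousLinearMap.opNorm_le_bound _ hc (fun x => ?_)
  set L := toEuclideanCLM (𝕜 := ℝ) M
  set u : Fin n → ℝ := WithLp.equiv 2 _ (L x) with hu
  set v : Fin n → ℝ := WithLp.equiv 2 _ x with hv
  have hLx : u = M *ᵥ v := by
    rw [hu]; exact Matrix.ofLp_toEuclideanCLM M x
  have h1 : ‖L x‖ ^ 2 = u ⬝ᵥ M *ᵥ v := by
    rw [norm_sq_eq_dot', ← hu, hLx]
  have h2 : (u ⬝ᵥ M *ᵥ v) ^ 2 ≤ (u ⬝ᵥ M *ᵥ u) * (v ⬝ᵥ M *ᵥ v) := psd_cs' hM u v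
  have h3 : u ⬝ᵥ M *ᵥ u ≤ c * ‖L x‖ ^ 2 := h (L x)
  have h4 : v ⬝ᵥ M *ᵥ v ≤ c * ‖x‖ ^ 2 := h x
  have h5 : 0 ≤ u ⬝ᵥ M *ᵥ u := psd_quad_nonneg' hM u
  have h6 : 0 ≤ v ⬝ᵥ M *ᵥ v := psd_quad_nonneg' hM v
  have h7 : ‖L x‖ ^ 4 ≤ (c * ‖L x‖) ^ 2 * ‖x‖ ^ 2 := by
    have := h2.trans (by nlinarith : (u ⬝ᵥ M *ᵥ u) * (v ⬝ᵥ M *ᵥ v) ≤ (c * ‖L x‖ ^ 2) * (c * ‖x‖ ^ 2))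
    calc ‖L x‖ ^ 4 = (‖L x‖ ^ 2) ^ 2 := by ring
      _ = (u ⬝ᵥ M *ᵥ v) ^ 2 := by rw [h1]
      _ ≤ (c * ‖L x‖ ^ 2) * (c * ‖x‖ ^ 2) := this
      _ = (c * ‖L x‖) ^ 2 * ‖x‖ ^ 2 := by ring
  rcases eq_or_lt_of_le (norm_nonneg (L x)) with hz | hz
  · rw [← hz]; positivity
  · have hb : 0 ≤ c * ‖x‖ := mul_nonneg hc (norm_nonneg x)
    have ha2 : ‖L x‖ ^ 2 ≤ (c * ‖x‖) ^ 2 := by nlinarith [mul_pos hz hz]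
    exact (pow_le_pow_iff_left₀ (norm_nonneg _) hb two_ne_zero).mp ha2

/-- The quadratic form `M ↦ x ⬝ᵥ M *ᵥ x` as a continuous linear map. -/
noncomputable def quadCLM (x : Fin n → ℝ) : Matrix (Fin n) (Fin n) ℝ →L[ℝ] ℝ :=
  LinearMap.toContinuousLinearMap
    { toFun := fun M => x ⬝ᵥ M *ᵥ x
      map_add' := fun M N => by rw [Matrix.add_mulVec, dotProduct_add]
      map_smul' := fun a M => by
        rw [Matrix.smul_mulVec, dotProduct_smul, RingHom.id_apply, smul_eq_mul] }

@[simp] lemma quadCLM_apply (x : Fin n → ℝ) (M : Matrix (Fin n) (Fin n) ℝ) :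
    quadCLM x M = x ⬝ᵥ M *ᵥ x := rfl

end Helpers

set_option maxHeartbeats 1000000 in
/-- Grönwall-type a priori bound for a matrix differential inequality
(differential form, Proposition 3.1). -/
theorem apriori_bound_differential_form {n : ℕ} (T : ℝ) (hT : 0 < T)
    (A C : ℝ → Matrix (Fin n) (Fin n) ℝ)
    (hA : ContinuousOn A (Set.Icc 0 T)) (hC : ContinuousOn C (Set.Icc 0 T))
    (P P' : ℝ → Matrix (Fin n) (Fin n) ℝ)
    (Qhat Ghat : Matrix (Fin n) (Fin n) ℝ)
    (hQhat : Qhat.PosDef) (hGhat : Ghat.PosDef)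
    (hPcont : ContinuousOn P (Set.Icc 0 T))
    (hPsymm : ∀ t ∈ Set.Icc (0:ℝ) T, (P t).IsSymm)
    (hderiv : ∀ t₀ ∈ Set.Icc (0:ℝ) T, HasDerivWithinAt P (P' t₀) (Set.Icc 0 T) t₀)
    (hineq : ∀ t₀ ∈ Set.Icc (0:ℝ) T,
      (P t₀ * A t₀ + (A t₀)ᵀ * P t₀ + (C t₀)ᵀ * P t₀ * C t₀ + Qhat + P' t₀).PosSemidef)
    (hPpos : ∀ t ∈ Set.Icc (0:ℝ) T, (P t).PosSemidef)
    (hPT : (Ghat - P T).PosSemidef) :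
    ∀ t ∈ Set.Icc (0:ℝ) T,
      ‖P t‖ ≤ (‖Ghat‖ + T * ‖Qhat‖) *
        Real.exp (∫ s in (0:ℝ)..T, (2 * ‖A s‖ + ‖C s‖ ^ 2)) := by
  have hT0 : (0:ℝ) ≤ T := hT.le
  have hTmem : T ∈ Set.Icc (0:ℝ) T := ⟨hT0, le_refl T⟩
  -- projection onto [0, T]
  set proj : ℝ → ℝ := fun r => max 0 (min r T) with hproj_def
  have hproj_cont : Continuous proj := continuous_const.max (continuous_id.min continuous_const)
  have hproj_mem : ∀ r, proj r ∈ Set.Icc (0:ℝ) T :=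
    fun r => ⟨le_max_left _ _, max_le hT0 (min_le_right _ _)⟩
  have hproj_eq : ∀ r ∈ Set.Icc (0:ℝ) T, proj r = r := by
    intro r hr
    simp only [hproj_def]
    rw [min_eq_left hr.2, max_eq_right hr.1]
  -- continuous extensions of the coefficient functions
  set K : ℝ → ℝ := fun r => 2 * ‖A (proj r)‖ + ‖C (proj r)‖ ^ 2 with hK_def
  set G : ℝ → ℝ := fun r => ‖P (proj r)‖ with hG_def
  have hAc : Continuous fun r => A (proj r) := hA.comp_continuous hproj_cont hproj_mem
  have hCc : Continuous fun r => C (proj r) := hC.comp_continuous hproj_cont hproj_mem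
  have hKcont : Continuous K := ((continuous_const.mul hAc.norm).add (hCc.norm.pow 2))
  have hGcont : Continuous G := (hPcont.comp_continuous hproj_cont hproj_mem).norm
  have hK0 : ∀ r, 0 ≤ K r := fun r => by positivity
  have hG0 : ∀ r, 0 ≤ G r := fun r => norm_nonneg _
  have hKeq : ∀ r ∈ Set.Icc (0:ℝ) T, K r = 2 * ‖A r‖ + ‖C r‖ ^ 2 := by
    intro r hr; simp only [hK_def, hproj_eq r hr]
  have hGeq : ∀ r ∈ Set.Icc (0:ℝ) T, G r = ‖P r‖ := by
    intro r hr; simp only [hG_def, hproj_eq r hr]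
  set q : ℝ := ‖Qhat‖ with hq_def
  set b : ℝ := ‖Ghat‖ with hb_def
  set a : ℝ := b + T * q with ha_def
  have hq0 : 0 ≤ q := norm_nonneg _
  have hb0 : 0 ≤ b := norm_nonneg _
  have ha0 : 0 ≤ a := by positivity
  -- ‖P T‖ ≤ b
  have hPTle : ‖P T‖ ≤ b := by
    refine norm_le_of_quad' (hPpos T hTmem) (norm_nonneg Ghat) (fun x => ?_)
    have h1 := psd_quad_nonneg' hPT (WithLp.equiv 2 _ x)
    have h2 := quad_le_norm' Ghat x
    rw [Matrix.sub_mulVec, dotProduct_sub] at h1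
    linarith
  set KG : ℝ → ℝ := fun r => K r * G r with hKG_def
  have hKGcont : Continuous KG := hKcont.mul hGcont
  have hKG0 : ∀ r, 0 ≤ KG r := fun r => mul_nonneg (hK0 r) (hG0 r)
  set u : ℝ → ℝ := fun s => a + ∫ r in s..T, KG r with hu_def
  -- Step 1: integral inequality ‖P s‖ ≤ u s on [0, T]
  have step1 : ∀ s ∈ Set.Icc (0:ℝ) T, ‖P s‖ ≤ u s := by
    intro s hs
    have hsub : Set.Icc s T ⊆ Set.Icc (0:ℝ) T := Set.Icc_subset_Icc hs.1 le_rfl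
    have hint_nonneg : 0 ≤ ∫ r in s..T, KG r :=
      intervalIntegral.integral_nonneg hs.2 (fun r _ => hKG0 r)
    have hu_nonneg : 0 ≤ u s := by simp only [hu_def]; linarith
    refine norm_le_of_quad' (hPpos s hs) hu_nonneg (fun x => ?_)
    set v : Fin n → ℝ := WithLp.equiv 2 _ x with hv_def
    set c : ℝ := ‖x‖ ^ 2 with hc_def
    have hc0 : 0 ≤ c := sq_nonneg _
    -- pointwise lower bound on the derivative of the quadratic form
    have hlow : ∀ w ∈ Set.Icc (0:ℝ) T, -((K w * G w + q) * c) ≤ v ⬝ᵥ (P' w) *ᵥ v := by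
      intro w hw
      have h0 := psd_quad_nonneg' (hineq w hw) v
      rw [Matrix.add_mulVec, dotProduct_add] at h0
      rw [Matrix.add_mulVec, dotProduct_add] at h0
      rw [Matrix.add_mulVec, dotProduct_add] at h0
      rw [Matrix.add_mulVec, dotProduct_add] at h0
      have e1 : v ⬝ᵥ (P w * A w) *ᵥ v ≤ ‖P w‖ * ‖A w‖ * c := by
        calc v ⬝ᵥ (P w * A w) *ᵥ v ≤ ‖P w * A w‖ * c := quad_le_norm' _ x
          _ ≤ ‖P w‖ * ‖A w‖ * c := by
              have := Matrix.l2_opNorm_mul (P w) (A w)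
              nlinarith [norm_nonneg (P w * A w)]
      have e2 : v ⬝ᵥ ((A w)ᵀ * P w) *ᵥ v ≤ ‖A w‖ * ‖P w‖ * c := by
        have htr : ‖(A w)ᵀ‖ = ‖A w‖ := by
          rw [← Matrix.conjTranspose_eq_transpose_of_trivial, Matrix.l2_opNorm_conjTranspose]
        calc v ⬝ᵥ ((A w)ᵀ * P w) *ᵥ v ≤ ‖(A w)ᵀ * P w‖ * c := quad_le_norm' _ x
          _ ≤ ‖A w‖ * ‖P w‖ * c := by
              have := Matrix.l2_opNorm_mul ((A w)ᵀ) (P w)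
              rw [htr] at this
              nlinarith [norm_nonneg ((A w)ᵀ * P w)]
      have e3 : v ⬝ᵥ ((C w)ᵀ * P w * C w) *ᵥ v ≤ ‖C w‖ ^ 2 * ‖P w‖ * c := by
        have htr : ‖(C w)ᵀ‖ = ‖C w‖ := by
          rw [← Matrix.conjTranspose_eq_transpose_of_trivial, Matrix.l2_opNorm_conjTranspose]
        have hm1 : ‖(C w)ᵀ * P w * C w‖ ≤ ‖(C w)ᵀ * P w‖ * ‖C w‖ :=
          Matrix.l2_opNorm_mul _ _
        have hm2 : ‖(C w)ᵀ * P w‖ ≤ ‖C w‖ * ‖P w‖ := by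
          have := Matrix.l2_opNorm_mul ((C w)ᵀ) (P w)
          rwa [htr] at this
        calc v ⬝ᵥ ((C w)ᵀ * P w * C w) *ᵥ v ≤ ‖(C w)ᵀ * P w * C w‖ * c := quad_le_norm' _ x
          _ ≤ ‖C w‖ ^ 2 * ‖P w‖ * c := by
              have hn : ‖(C w)ᵀ * P w * C w‖ ≤ ‖C w‖ ^ 2 * ‖P w‖ := by
                nlinarith [norm_nonneg ((C w)ᵀ * P w), norm_nonneg (C w), norm_nonneg (P w)]
              exact mul_le_mul_of_nonneg_right hn hc0
      have e4 : v ⬝ᵥ Qhat *ᵥ v ≤ q * c := quad_le_norm' _ x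
      have hKw := hKeq w hw
      have hGw := hGeq w hw
      have : K w * G w + q = 2 * ‖A w‖ * ‖P w‖ + ‖C w‖ ^ 2 * ‖P w‖ + q := by
        rw [hKw, hGw]; ring
      rw [this]
      nlinarith
    set ψ : ℝ → ℝ := fun r => (K r * G r + q) * c with hψ_def
    have hψcont : Continuous ψ := ((hKcont.mul hGcont).add continuous_const).mul continuous_const
    have hψ0 : ∀ r, 0 ≤ ψ r := fun r =>
      mul_nonneg (add_nonneg (mul_nonneg (hK0 r) (hG0 r)) hq0) hc0
    have hInt : ∀ w : ℝ, HasDerivAt (fun z => ∫ r in s..z, ψ r) (ψ w) w := by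
      intro w
      exact intervalIntegral.integral_hasDerivAt_right
        ((hψcont.intervalIntegrable _ _))
        (hψcont.stronglyMeasurableAtFilter _ _)
        hψcont.continuousAt
    set f : ℝ → ℝ := fun z => quadCLM v (P z) with hf_def
    have hfderiv : ∀ w ∈ Set.Icc (0:ℝ) T,
        HasDerivWithinAt f (quadCLM v (P' w)) (Set.Icc 0 T) w := by
      intro w hw
      exact (quadCLM v).hasFDerivAt.comp_hasDerivWithinAt w (hderiv w hw)
    set F : ℝ → ℝ := fun z => f z + ∫ r in s..z, ψ r with hF_def
    have hFcont : ContinuousOn F (Set.Icc s T) := by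
      apply ContinuousOn.add
      · exact (quadCLM v).continuous.comp_continuousOn (hPcont.mono hsub)
      · exact (continuous_iff_continuousAt.2 fun w => (hInt w).continuousAt).continuousOn
    have hFmono : MonotoneOn F (Set.Icc s T) := by
      apply monotoneOn_of_hasDerivWithinAt_nonneg (convex_Icc s T) hFcont
        (f' := fun w => quadCLM v (P' w) + ψ w)
      · intro w hw
        rw [interior_Icc] at hw
        have hw' : w ∈ Set.Icc (0:ℝ) T := hsub ⟨hw.1.le, hw.2.le⟩
        exact ((hfderiv w hw').mono
            (by rw [interior_Icc]; exact (Set.Ioo_subset_Icc_self).trans hsub)).add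
          (hInt w).hasDerivWithinAt
      · intro w hw
        rw [interior_Icc] at hw
        have hw' : w ∈ Set.Icc (0:ℝ) T := hsub ⟨hw.1.le, hw.2.le⟩
        have := hlow w hw'
        simp only [quadCLM_apply, hψ_def]
        linarith
    have hle : F s ≤ F T := hFmono ⟨le_rfl, hs.2⟩ ⟨hs.2, le_rfl⟩ hs.2
    have hFs : F s = f s := by simp [hF_def, intervalIntegral.integral_same]
    have hψsplit : (∫ r in s..T, ψ r)
        = (∫ r in s..T, KG r) * c + (T - s) * (q * c) := by
      have : ∀ r, ψ r = KG r * c + q * c := fun r => by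
        simp only [hψ_def, hKG_def]; ring
      simp_rw [this]
      rw [intervalIntegral.integral_add (f := fun r => KG r * c) (g := fun _ => q * c) ((hKGcont.mul continuous_const).intervalIntegrable _ _)
        (intervalIntegrable_const), intervalIntegral.integral_mul_const,
        intervalIntegral.integral_const, smul_eq_mul]
    have hfT : f T ≤ b * c := by
      calc f T = v ⬝ᵥ (P T) *ᵥ v := by simp [hf_def]
        _ ≤ ‖P T‖ * c := quad_le_norm' _ x
        _ ≤ b * c := by nlinarith
    have hfs : v ⬝ᵥ (P s) *ᵥ v = f s := by simp [hf_def]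
    rw [hfs]
    have h1 : f s ≤ f T + (∫ r in s..T, KG r) * c + (T - s) * (q * c) := by
      have := hle
      rw [hFs, hF_def] at this
      simp only at this
      rw [hψsplit] at this
      linarith
    have h2 : (T - s) * (q * c) ≤ T * q * c := by
      have := mul_nonneg hs.1 (mul_nonneg hq0 hc0)
      nlinarith
    have hint_nonneg' : 0 ≤ (∫ r in s..T, KG r) := hint_nonneg
    calc f s ≤ f T + (∫ r in s..T, KG r) * c + (T - s) * (q * c) := h1
      _ ≤ b * c + (∫ r in s..T, KG r) * c + T * q * c := by linarith
      _ = u s * c := by simp only [hu_def, ha_def]; ring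
  -- Step 2: Grönwall
  set I : ℝ → ℝ := fun s => ∫ r in s..T, K r with hI_def
  have hu' : ∀ s, HasDerivAt u (-(KG s)) s := by
    intro s
    have := intervalIntegral.integral_hasDerivAt_left
      (hKGcont.intervalIntegrable s T)
      (hKGcont.stronglyMeasurableAtFilter _ _)
      hKGcont.continuousAt
    exact this.const_add a
  have hI' : ∀ s, HasDerivAt I (-(K s)) s := by
    intro s
    exact intervalIntegral.integral_hasDerivAt_left
      (hKcont.intervalIntegrable s T)
      (hKcont.stronglyMeasurableAtFilter _ _)
      hKcont.continuousAt
  set φ : ℝ → ℝ := fun s => u s * Real.exp (-(I s)) with hφ_def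
  have hφ' : ∀ s, HasDerivAt φ
      (-(KG s) * Real.exp (-(I s)) + u s * (Real.exp (-(I s)) * K s)) s := by
    intro s
    have he : HasDerivAt (fun z => Real.exp (-(I z))) (Real.exp (-(I s)) * K s) s := by
      have h1 : HasDerivAt (fun z => -(I z)) (K s) s := by
        have h := (hI' s).neg; rw [neg_neg] at h; exact h
      simpa using h1.exp
    exact (hu' s).mul he
  have hφmono : MonotoneOn φ (Set.Icc 0 T) := by
    apply monotoneOn_of_hasDerivWithinAt_nonneg (convex_Icc 0 T)
      (f' := fun s => -(KG s) * Real.exp (-(I s)) + u s * (Real.exp (-(I s)) * K s))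
      ((continuous_iff_continuousAt.2 fun w => (hφ' w).continuousAt).continuousOn)
    · intro w hw
      exact (hφ' w).hasDerivWithinAt
    · intro w hw
      rw [interior_Icc] at hw
      have hGu : G w ≤ u w := by
        rw [hGeq w ⟨hw.1.le, hw.2.le⟩]
        exact step1 w ⟨hw.1.le, hw.2.le⟩
      have hexp : 0 < Real.exp (-(I w)) := Real.exp_pos _
      have : -(KG w) * Real.exp (-(I w)) + u w * (Real.exp (-(I w)) * K w)
          = Real.exp (-(I w)) * (K w * (u w - G w)) := by
        simp only [hKG_def]; ring
      rw [this]
      exact mul_nonneg hexp.le (mul_nonneg (hK0 w) (by linarith))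
  -- conclude
  intro t ht
  have hφle : φ t ≤ φ T := hφmono ht hTmem ht.2
  have hφT : φ T = a := by
    simp [hφ_def, hu_def, hI_def, intervalIntegral.integral_same]
  have hut : u t ≤ a * Real.exp (I t) := by
    have h1 : u t * Real.exp (-(I t)) ≤ a := by rw [← hφT]; exact hφle
    have h2 : (0:ℝ) < Real.exp (-(I t)) := Real.exp_pos _
    have h3 : Real.exp (-(I t)) * Real.exp (I t) = 1 := by
      rw [← Real.exp_add]; simp
    nlinarith [Real.exp_pos (I t)]
  have hItle : I t ≤ I 0 := by
    have hsplit : (∫ r in (0:ℝ)..t, K r) + (∫ r in t..T, K r) = ∫ r in (0:ℝ)..T, K r :=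
      intervalIntegral.integral_add_adjacent_intervals
        (hKcont.intervalIntegrable _ _) (hKcont.intervalIntegrable _ _)
    have hpos : 0 ≤ ∫ r in (0:ℝ)..t, K r :=
      intervalIntegral.integral_nonneg ht.1 (fun r _ => hK0 r)
    simp only [hI_def]
    linarith [hsplit]
  have hI0 : I 0 = ∫ s in (0:ℝ)..T, (2 * ‖A s‖ + ‖C s‖ ^ 2) := by
    apply intervalIntegral.integral_congr
    intro r hr
    rw [Set.uIcc_of_le hT0] at hr
    exact hKeq r hr
  calc ‖P t‖ ≤ u t := step1 t ht
    _ ≤ a * Real.exp (I t) := hut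
    _ ≤ a * Real.exp (I 0) := by
        have := Real.exp_le_exp.2 hItle
        nlinarith [Real.exp_pos (I t)]
    _ = (‖Ghat‖ + T * ‖Qhat‖) * Real.exp (∫ s in (0:ℝ)..T, (2 * ‖A s‖ + ‖C s‖ ^ 2)) := by
        rw [hI0]
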